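/- Let A ⊆ B(H) be a C*-algebra acting non-degenerately on H. The map φ : ℓ²_strong(LM(A)) → ℓ²(A)′ sending (t_n) to the map (a_n) ↦ ∑ a_n t_n* is an anti-linear isometric isomorphism of Banach A-modules onto the dual ℓ²(A)′ of all bounded module maps ℓ²(A) → A. -/

import Mathlib

open Filter Topology

noncomputable section

variable {H : Type*} [NormedAddCommGroup H] [InnerProductSpace ℂ H] [CompleteSpace H]

/-- A set of operators acts non-degenerately on `H` if the span of its total range is dense. -/
def Nondegenerate (A : Set (H →L[ℂ] H)) : Prop :=
  Dense (↑(Submodule.span ℂ {ξ : H | ∃ a ∈ A, ∃ η : H, a η = ξ}) : Set H)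

/-- Left multipliers of `A` inside `B(H)`. -/
def LeftMult (A : Set (H →L[ℂ] H)) : Set (H →L[ℂ] H) :=
  {t | ∀ a ∈ A, t * a ∈ A}

/-- Membership in the standard Hilbert module `ℓ²(A)`. -/
def MemL2 (A : Set (H →L[ℂ] H)) (a : ℕ → H →L[ℂ] H) : Prop :=
  (∀ n, a n ∈ A) ∧
    ∃ s : H →L[ℂ] H,
      Tendsto (fun N : ℕ => ∑ n ∈ Finset.range N, a n * star (a n)) atTop (𝓝 s)

/-- The Hilbert C*-module norm of a sequence of operators. -/
def l2norm (a : ℕ → H →L[ℂ] H) : ℝ :=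
  Real.sqrt (⨆ N : ℕ, ‖∑ n ∈ Finset.range N, a n * star (a n)‖)

/-- Membership in `ℓ²_strong(LM(A))`. -/
def MemL2StrongLM (A : Set (H →L[ℂ] H)) (t : ℕ → H →L[ℂ] H) : Prop :=
  (∀ n, t n ∈ LeftMult A) ∧
    ∃ C : ℝ, ∀ N : ℕ, ‖∑ n ∈ Finset.range N, t n * star (t n)‖ ≤ C


set_option linter.unusedSectionVars false
set_option linter.unusedVariables false
set_option maxHeartbeats 1000000

namespace Stmt5Aux

variable {H : Type*} [NormedAddCommGroup H] [InnerProductSpace ℂ H] [CompleteSpace H]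

lemma apply_mul_star (a t : H →L[ℂ] H) (ξ : H) : (a * star t) ξ = a ((star t) ξ) := rfl

lemma inner_mul_star_self (t : H →L[ℂ] H) (ξ : H) :
    (inner ℂ ((t * star t) ξ) ξ : ℂ) = ((‖(star t) ξ‖ : ℝ) : ℂ)^2 := by
  rw [apply_mul_star, ContinuousLinearMap.star_eq_adjoint,
    ← ContinuousLinearMap.adjoint_adjoint t, ContinuousLinearMap.adjoint_inner_left,
    ContinuousLinearMap.adjoint_adjoint]
  exact_mod_cast inner_self_eq_norm_sq_to_K _

lemma inner_mul_star (a t : H →L[ℂ] H) (ξ η : H) :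
    (inner ℂ ((a * star t) ξ) η : ℂ) = inner ℂ ((star t) ξ) ((star a) η) := by
  rw [apply_mul_star, ContinuousLinearMap.star_eq_adjoint (A := a),
    ← ContinuousLinearMap.adjoint_adjoint a, ContinuousLinearMap.adjoint_inner_left,
    ContinuousLinearMap.adjoint_adjoint]

lemma quad_bound (F : Finset ℕ) (u : ℕ → H →L[ℂ] H) (ξ : H) :
    ∑ n ∈ F, ‖(star (u n)) ξ‖^2 ≤ ‖∑ n ∈ F, u n * star (u n)‖ * ‖ξ‖^2 := by
  have h1 : (inner ℂ ((∑ n ∈ F, u n * star (u n)) ξ) ξ : ℂ)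
      = ((∑ n ∈ F, ‖(star (u n)) ξ‖^2 : ℝ) : ℂ) := by
    rw [ContinuousLinearMap.sum_apply, sum_inner]
    push_cast
    exact Finset.sum_congr rfl fun n _ => inner_mul_star_self (u n) ξ
  have h2 : (∑ n ∈ F, ‖(star (u n)) ξ‖^2 : ℝ)
      = ‖(inner ℂ ((∑ n ∈ F, u n * star (u n)) ξ) ξ : ℂ)‖ := by
    rw [h1, Complex.norm_real]
    exact (Real.norm_of_nonneg (Finset.sum_nonneg fun n _ => sq_nonneg _)).symm
  calc (∑ n ∈ F, ‖(star (u n)) ξ‖^2 : ℝ)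
      = ‖(inner ℂ ((∑ n ∈ F, u n * star (u n)) ξ) ξ : ℂ)‖ := h2
    _ ≤ ‖(∑ n ∈ F, u n * star (u n)) ξ‖ * ‖ξ‖ := norm_inner_le_norm _ _
    _ ≤ (‖∑ n ∈ F, u n * star (u n)‖ * ‖ξ‖) * ‖ξ‖ := by
        gcongr; exact ContinuousLinearMap.le_opNorm _ _
    _ = ‖∑ n ∈ F, u n * star (u n)‖ * ‖ξ‖^2 := by ring

/-- Cauchy–Schwarz for finite operator sums. -/
lemma cs_bound (F : Finset ℕ) (a t : ℕ → H →L[ℂ] H) :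
    ‖∑ n ∈ F, a n * star (t n)‖ ≤
      Real.sqrt ‖∑ n ∈ F, a n * star (a n)‖ * Real.sqrt ‖∑ n ∈ F, t n * star (t n)‖ := by
  set S := ∑ n ∈ F, a n * star (t n) with hS
  set P := ‖∑ n ∈ F, a n * star (a n)‖ with hP
  set T := ‖∑ n ∈ F, t n * star (t n)‖ with hT
  have key : ∀ ξ η : H, ‖(inner ℂ (S ξ) η : ℂ)‖ ≤
      (Real.sqrt T * ‖ξ‖) * (Real.sqrt P * ‖η‖) := by
    intro ξ η
    have h2 : (inner ℂ (S ξ) η : ℂ) = ∑ n ∈ F, (inner ℂ ((star (t n)) ξ) ((star (a n)) η) : ℂ) := by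
      rw [hS, ContinuousLinearMap.sum_apply, sum_inner]
      exact Finset.sum_congr rfl fun n _ => inner_mul_star (a n) (t n) ξ η
    have h3 : ‖(inner ℂ (S ξ) η : ℂ)‖ ≤ ∑ n ∈ F, ‖(star (t n)) ξ‖ * ‖(star (a n)) η‖ := by
      rw [h2]
      refine (norm_sum_le _ _).trans (Finset.sum_le_sum fun n _ => norm_inner_le_norm _ _)
    have h4 : ∑ n ∈ F, ‖(star (t n)) ξ‖ * ‖(star (a n)) η‖ ≤
        Real.sqrt (∑ n ∈ F, ‖(star (t n)) ξ‖^2) * Real.sqrt (∑ n ∈ F, ‖(star (a n)) η‖^2) := by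
      rw [← Real.sqrt_mul (Finset.sum_nonneg fun n _ => sq_nonneg _)]
      rw [show (∑ n ∈ F, ‖(star (t n)) ξ‖ * ‖(star (a n)) η‖)
          = Real.sqrt ((∑ n ∈ F, ‖(star (t n)) ξ‖ * ‖(star (a n)) η‖)^2) from
        (Real.sqrt_sq (Finset.sum_nonneg fun n _ =>
          mul_nonneg (norm_nonneg _) (norm_nonneg _))).symm]
      exact Real.sqrt_le_sqrt (Finset.sum_mul_sq_le_sq_mul_sq F _ _)
    have h5 : Real.sqrt (∑ n ∈ F, ‖(star (t n)) ξ‖^2) ≤ Real.sqrt T * ‖ξ‖ := by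
      rw [show Real.sqrt T * ‖ξ‖ = Real.sqrt (T * ‖ξ‖^2) by
        rw [Real.sqrt_mul (norm_nonneg _), Real.sqrt_sq (norm_nonneg _)]]
      exact Real.sqrt_le_sqrt (quad_bound F t ξ)
    have h6 : Real.sqrt (∑ n ∈ F, ‖(star (a n)) η‖^2) ≤ Real.sqrt P * ‖η‖ := by
      rw [show Real.sqrt P * ‖η‖ = Real.sqrt (P * ‖η‖^2) by
        rw [Real.sqrt_mul (norm_nonneg _), Real.sqrt_sq (norm_nonneg _)]]
      exact Real.sqrt_le_sqrt (quad_bound F a η)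
    calc ‖(inner ℂ (S ξ) η : ℂ)‖ ≤ ∑ n ∈ F, ‖(star (t n)) ξ‖ * ‖(star (a n)) η‖ := h3
      _ ≤ Real.sqrt (∑ n ∈ F, ‖(star (t n)) ξ‖^2) *
            Real.sqrt (∑ n ∈ F, ‖(star (a n)) η‖^2) := h4
      _ ≤ (Real.sqrt T * ‖ξ‖) * (Real.sqrt P * ‖η‖) := by
          have := Real.sqrt_nonneg (∑ n ∈ F, ‖(star (a n)) η‖^2)
          have := Real.sqrt_nonneg (∑ n ∈ F, ‖(star (t n)) ξ‖^2)
          have h5' := h5; have h6' := h6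
          nlinarith [Real.sqrt_nonneg T, Real.sqrt_nonneg P, norm_nonneg ξ, norm_nonneg η]
  have hvec : ∀ ξ : H, ‖S ξ‖ ≤ (Real.sqrt P * Real.sqrt T) * ‖ξ‖ := by
    intro ξ
    rcases eq_or_ne (S ξ) 0 with h0 | h0
    · rw [h0, norm_zero]; positivity
    · have hk := key ξ (S ξ)
      have hss : ‖(inner ℂ (S ξ) (S ξ) : ℂ)‖ = ‖S ξ‖^2 := by
        rw [inner_self_eq_norm_sq_to_K, norm_pow, RCLike.norm_ofReal, abs_norm]
      rw [hss] at hk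
      have hpos : 0 < ‖S ξ‖ := norm_pos_iff.mpr h0
      have : ‖S ξ‖ * ‖S ξ‖ ≤ ((Real.sqrt P * Real.sqrt T) * ‖ξ‖) * ‖S ξ‖ := by
        nlinarith [hk]
      exact le_of_mul_le_mul_right this hpos
  calc ‖S‖ ≤ Real.sqrt P * Real.sqrt T := ContinuousLinearMap.opNorm_le_bound _
        (by positivity) hvec
    _ = Real.sqrt P * Real.sqrt T := rfl


lemma sum_ite_lt (f : ℕ → H →L[ℂ] H) (M N : ℕ) :
    ∑ n ∈ Finset.range M, (if n < N then f n else 0) = ∑ n ∈ Finset.range (min M N), f n := by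
  rw [← Finset.sum_filter]
  congr 1
  ext n
  simp [lt_min_iff]

lemma diff_bound (a t : ℕ → H →L[ℂ] H) {m n : ℕ} (h : m ≤ n) :
    ‖(∑ k ∈ Finset.range n, a k * star (t k)) - ∑ k ∈ Finset.range m, a k * star (t k)‖ ≤
      Real.sqrt ‖(∑ k ∈ Finset.range n, a k * star (a k)) -
          ∑ k ∈ Finset.range m, a k * star (a k)‖ *
      Real.sqrt ‖(∑ k ∈ Finset.range n, t k * star (t k)) -
          ∑ k ∈ Finset.range m, t k * star (t k)‖ := by
  rw [← Finset.sum_Ico_eq_sub _ h, ← Finset.sum_Ico_eq_sub _ h, ← Finset.sum_Ico_eq_sub _ h]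
  exact cs_bound _ a t

lemma sum_star_nonneg (u : ℕ → H →L[ℂ] H) (F : Finset ℕ) : 0 ≤ ∑ n ∈ F, u n * star (u n) :=
  Finset.sum_nonneg fun n _ => mul_star_self_nonneg _

lemma norm_P_mono (u : ℕ → H →L[ℂ] H) {M N : ℕ} (h : M ≤ N) :
    ‖∑ n ∈ Finset.range M, u n * star (u n)‖ ≤ ‖∑ n ∈ Finset.range N, u n * star (u n)‖ := by
  refine CStarAlgebra.norm_le_norm_of_nonneg_of_le (sum_star_nonneg u _) ?_
  rw [← sub_nonneg, ← Finset.sum_Ico_eq_sub _ h]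
  exact sum_star_nonneg u _

lemma exists_lim (a t : ℕ → H →L[ℂ] H)
    (ha : CauchySeq (fun N => ∑ n ∈ Finset.range N, a n * star (a n)))
    (C : ℝ) (hC : ∀ N, ‖∑ n ∈ Finset.range N, t n * star (t n)‖ ≤ C) :
    ∃ s, Tendsto (fun N => ∑ n ∈ Finset.range N, a n * star (t n)) atTop (𝓝 s) := by
  apply cauchySeq_tendsto_of_complete
  rw [Metric.cauchySeq_iff]
  intro ε hε
  have hC0 : 0 ≤ C := le_trans (norm_nonneg _) (hC 0)
  set δ : ℝ := ε ^ 2 / (2 * (2 * C + 1)) with hδ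
  have hδpos : 0 < δ := by positivity
  obtain ⟨N, hN⟩ := Metric.cauchySeq_iff.1 ha δ hδpos
  refine ⟨N, fun m hm n hn => ?_⟩
  -- reduce to the case n ≤ m
  have main : ∀ m n, N ≤ m → N ≤ n → n ≤ m →
      dist (∑ k ∈ Finset.range m, a k * star (t k))
        (∑ k ∈ Finset.range n, a k * star (t k)) < ε := by
    intro m n hm hn hnm
    rw [dist_eq_norm]
    have h1 := diff_bound a t hnm
    have h2 : ‖(∑ k ∈ Finset.range m, a k * star (a k)) -
        ∑ k ∈ Finset.range n, a k * star (a k)‖ < δ := by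
      have := hN m hm n hn
      rwa [dist_eq_norm] at this
    have h3 : ‖(∑ k ∈ Finset.range m, t k * star (t k)) -
        ∑ k ∈ Finset.range n, t k * star (t k)‖ ≤ 2 * C + 1 := by
      refine (norm_sub_le _ _).trans ?_
      have := hC m; have := hC n; linarith
    calc ‖(∑ k ∈ Finset.range m, a k * star (t k)) -
          ∑ k ∈ Finset.range n, a k * star (t k)‖
        ≤ _ * _ := h1
      _ ≤ Real.sqrt δ * Real.sqrt (2 * C + 1) :=
          mul_le_mul (Real.sqrt_le_sqrt h2.le) (Real.sqrt_le_sqrt h3)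
            (Real.sqrt_nonneg _) (Real.sqrt_nonneg _)
      _ = Real.sqrt (δ * (2 * C + 1)) := (Real.sqrt_mul hδpos.le _).symm
      _ < ε := by
          rw [show δ * (2 * C + 1) = ε ^ 2 / 2 by rw [hδ]; field_simp]
          have hlt : Real.sqrt (ε ^ 2 / 2) < Real.sqrt (ε ^ 2) :=
            Real.sqrt_lt_sqrt (by positivity) (by nlinarith)
          rwa [Real.sqrt_sq hε.le] at hlt
  rcases le_total n m with h | h
  · exact main m n hm hn h
  · rw [dist_comm]; exact main n m hn hm h


lemma part1 (A : StarSubalgebra ℂ (H →L[ℂ] H)) (hA : IsClosed (A : Set (H →L[ℂ] H)))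
    (t : ℕ → H →L[ℂ] H) (ht : MemL2StrongLM (A : Set (H →L[ℂ] H)) t) :
    (∀ a, MemL2 (A : Set (H →L[ℂ] H)) a →
      ∃ s ∈ (A : Set (H →L[ℂ] H)),
        Tendsto (fun N : ℕ => ∑ n ∈ Finset.range N, a n * star (t n)) atTop (𝓝 s)) ∧
    sSup {r : ℝ | ∃ a s, MemL2 (A : Set (H →L[ℂ] H)) a ∧ l2norm a ≤ 1 ∧
        Tendsto (fun N : ℕ => ∑ n ∈ Finset.range N, a n * star (t n)) atTop (𝓝 s) ∧
        r = ‖s‖} = l2norm t := by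
  obtain ⟨htLM, C, hC⟩ := ht
  have htA : ∀ n, t n ∈ A := fun n => by
    have := htLM n 1 (one_mem A); rwa [mul_one] at this
  have hC0 : 0 ≤ C := le_trans (norm_nonneg _) (hC 0)
  have hbddt : BddAbove (Set.range fun N => ‖∑ n ∈ Finset.range N, t n * star (t n)‖) :=
    ⟨C, by rintro x ⟨N, rfl⟩; exact hC N⟩
  have hsupt0 : 0 ≤ ⨆ N : ℕ, ‖∑ n ∈ Finset.range N, t n * star (t n)‖ :=
    le_trans (by simp) (le_ciSup hbddt 0)
  set c := l2norm t with hc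
  have hc0 : 0 ≤ c := Real.sqrt_nonneg _
  have hcsq : c ^ 2 = ⨆ N : ℕ, ‖∑ n ∈ Finset.range N, t n * star (t n)‖ := Real.sq_sqrt hsupt0
  have hPle : ∀ N, ‖∑ n ∈ Finset.range N, t n * star (t n)‖ ≤ c ^ 2 := fun N =>
    hcsq ▸ le_ciSup hbddt N
  have hex : ∀ a, MemL2 (A : Set (H →L[ℂ] H)) a →
      ∃ s ∈ (A : Set (H →L[ℂ] H)),
        Tendsto (fun N : ℕ => ∑ n ∈ Finset.range N, a n * star (t n)) atTop (𝓝 s) := by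
    rintro a ⟨haA, sa, hsa⟩
    obtain ⟨s, hs⟩ := exists_lim a t hsa.cauchySeq C hC
    refine ⟨s, ?_, hs⟩
    refine hA.mem_of_tendsto hs (Eventually.of_forall fun N => ?_)
    exact sum_mem fun n _ => mul_mem (haA n) (star_mem (htA n))
  refine ⟨hex, ?_⟩
  set SS := {r : ℝ | ∃ a s, MemL2 (A : Set (H →L[ℂ] H)) a ∧ l2norm a ≤ 1 ∧
      Tendsto (fun N : ℕ => ∑ n ∈ Finset.range N, a n * star (t n)) atTop (𝓝 s) ∧
      r = ‖s‖} with hSSdef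
  have hub : ∀ r ∈ SS, r ≤ c := by
    rw [hSSdef]
    rintro r ⟨a, s, ⟨haA, sa, hsa⟩, hna, hlim, rfl⟩
    have hbdda : BddAbove (Set.range fun N => ‖∑ n ∈ Finset.range N, a n * star (a n)‖) :=
      hsa.norm.bddAbove_range
    have hsupa0 : 0 ≤ ⨆ N : ℕ, ‖∑ n ∈ Finset.range N, a n * star (a n)‖ :=
      le_trans (by simp) (le_ciSup hbdda 0)
    have hasq : l2norm a ^ 2 = ⨆ N : ℕ, ‖∑ n ∈ Finset.range N, a n * star (a n)‖ :=
      Real.sq_sqrt hsupa0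
    have hQa : ∀ N, ‖∑ n ∈ Finset.range N, a n * star (a n)‖ ≤ l2norm a ^ 2 := fun N =>
      hasq ▸ le_ciSup hbdda N
    have hbound : ∀ N, ‖∑ n ∈ Finset.range N, a n * star (t n)‖ ≤ l2norm a * c := by
      intro N
      refine (cs_bound _ a t).trans ?_
      have h1 : Real.sqrt ‖∑ n ∈ Finset.range N, a n * star (a n)‖ ≤ l2norm a := by
        rw [show l2norm a = Real.sqrt (l2norm a ^ 2) from
          (Real.sqrt_sq (Real.sqrt_nonneg _)).symm]
        exact Real.sqrt_le_sqrt (hQa N)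
      have h2 : Real.sqrt ‖∑ n ∈ Finset.range N, t n * star (t n)‖ ≤ c := by
        rw [show c = Real.sqrt (c ^ 2) from (Real.sqrt_sq hc0).symm]
        exact Real.sqrt_le_sqrt (hPle N)
      exact mul_le_mul h1 h2 (Real.sqrt_nonneg _) (Real.sqrt_nonneg _)
    have hs : ‖s‖ ≤ l2norm a * c :=
      le_of_tendsto hlim.norm (Eventually.of_forall hbound)
    calc ‖s‖ ≤ l2norm a * c := hs
      _ ≤ 1 * c := mul_le_mul_of_nonneg_right hna hc0
      _ = c := one_mul c
  have hzero_mem : (0:ℝ) ∈ SS := by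
    rw [hSSdef]
    refine ⟨0, 0, ⟨fun n => zero_mem A, 0, ?_⟩, ?_, ?_, by simp⟩
    · simpa using (tendsto_const_nhds : Tendsto (fun _ : ℕ => (0 : H →L[ℂ] H)) atTop (𝓝 0))
    · rw [l2norm]
      simp only [Pi.zero_apply, zero_mul, Finset.sum_const_zero, norm_zero, ciSup_const]
      simp
    · simpa using (tendsto_const_nhds : Tendsto (fun _ : ℕ => (0 : H →L[ℂ] H)) atTop (𝓝 0))
  have hbddSS : BddAbove SS := ⟨c, hub⟩
  refine le_antisymm (Real.sSup_le hub hc0) ?_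
  rcases eq_or_lt_of_le hc0 with h0 | hcpos
  · exact h0 ▸ le_csSup hbddSS hzero_mem
  · have hmem : ∀ N : ℕ, c⁻¹ * ‖∑ n ∈ Finset.range N, t n * star (t n)‖ ∈ SS := by
      intro N
      rw [hSSdef]
      set z : ℂ := ((c⁻¹ : ℝ) : ℂ) with hz
      set a : ℕ → H →L[ℂ] H := fun n => if n < N then z • t n else 0 with ha
      have haA : ∀ n, a n ∈ A := fun n => by
        by_cases h : n < N
        · simpa [ha, h] using SMulMemClass.smul_mem z (htA n)
        · simpa [ha, h] using zero_mem A
      have hsum1 : ∀ M, ∑ n ∈ Finset.range M, a n * star (a n)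
          = ((c⁻¹ * c⁻¹ : ℝ) : ℂ) • ∑ n ∈ Finset.range (min M N), t n * star (t n) := by
        intro M
        rw [Finset.smul_sum, ← sum_ite_lt (fun n => ((c⁻¹ * c⁻¹ : ℝ) : ℂ) • (t n * star (t n)))]
        refine Finset.sum_congr rfl fun n _ => ?_
        by_cases h : n < N
        · simp only [ha, if_pos h]
          rw [star_smul, smul_mul_assoc, mul_smul_comm, smul_smul]
          congr 1
          rw [hz, Complex.star_def, Complex.conj_ofReal]
          push_cast
          ring
        · simp [ha, if_neg h]
      have hsum2 : ∀ M, ∑ n ∈ Finset.range M, a n * star (t n)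
          = z • ∑ n ∈ Finset.range (min M N), t n * star (t n) := by
        intro M
        rw [Finset.smul_sum, ← sum_ite_lt (fun n => z • (t n * star (t n)))]
        refine Finset.sum_congr rfl fun n _ => ?_
        by_cases h : n < N
        · simp only [ha, if_pos h]; rw [smul_mul_assoc]
        · simp [ha, if_neg h]
      have hnormz : ‖((c⁻¹ * c⁻¹ : ℝ) : ℂ)‖ = c⁻¹ * c⁻¹ := by
        rw [Complex.norm_real]
        exact abs_of_nonneg (by positivity)
      have hcne : c ≠ 0 := ne_of_gt hcpos
      have hna : l2norm a ≤ 1 := by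
        rw [l2norm]
        rw [show (1:ℝ) = Real.sqrt 1 from Real.sqrt_one.symm]
        refine Real.sqrt_le_sqrt (ciSup_le fun M => ?_)
        rw [hsum1 M, norm_smul, hnormz]
        calc c⁻¹ * c⁻¹ * ‖∑ n ∈ Finset.range (min M N), t n * star (t n)‖
            ≤ c⁻¹ * c⁻¹ * c ^ 2 := by
              refine mul_le_mul_of_nonneg_left (hPle _) (by positivity)
          _ = 1 := by field_simp
      have hlim : Tendsto (fun M : ℕ => ∑ n ∈ Finset.range M, a n * star (t n)) atTop
          (𝓝 (z • ∑ n ∈ Finset.range N, t n * star (t n))) := by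
        refine tendsto_atTop_of_eventually_const (i₀ := N) fun M hM => ?_
        rw [hsum2 M, min_eq_right hM]
      refine ⟨a, z • ∑ n ∈ Finset.range N, t n * star (t n),
        ⟨haA, ((c⁻¹ * c⁻¹ : ℝ) : ℂ) • ∑ n ∈ Finset.range N, t n * star (t n),
          tendsto_atTop_of_eventually_const (i₀ := N) fun M hM => by
            rw [hsum1 M, min_eq_right hM]⟩, hna, hlim, ?_⟩
      rw [norm_smul, hz, Complex.norm_real, Real.norm_of_nonneg (inv_nonneg.mpr hc0)]
    have key : ∀ N, ‖∑ n ∈ Finset.range N, t n * star (t n)‖ ≤ c * sSup SS := by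
      intro N
      have h1 := le_csSup hbddSS (hmem N)
      have hcne : c ≠ 0 := ne_of_gt hcpos
      calc ‖∑ n ∈ Finset.range N, t n * star (t n)‖
          = c * (c⁻¹ * ‖∑ n ∈ Finset.range N, t n * star (t n)‖) := by field_simp
        _ ≤ c * _ := mul_le_mul_of_nonneg_left h1 hc0
    have h2 : (⨆ N : ℕ, ‖∑ n ∈ Finset.range N, t n * star (t n)‖) ≤ c * sSup SS :=
      ciSup_le key
    rw [← hcsq] at h2
    have h3 : c * c ≤ c * sSup SS := by nlinarith [h2]
    exact le_of_mul_le_mul_left h3 hcpos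


/-- the sequence supported at `n` with value `x`. -/

def delta (n : ℕ) (x : H →L[ℂ] H) : ℕ → H →L[ℂ] H := fun k => if k = n then x else 0

/-- truncation to indices `< N`. -/
def trunc (a : ℕ → H →L[ℂ] H) (N : ℕ) : ℕ → H →L[ℂ] H := fun k => if k < N then a k else 0

/-- tail from index `N` on. -/
def tail (a : ℕ → H →L[ℂ] H) (N : ℕ) : ℕ → H →L[ℂ] H := fun k => if k < N then 0 else a k

section WithA
variable (A : StarSubalgebra ℂ (H →L[ℂ] H))

lemma memL2_zero : MemL2 (A : Set (H →L[ℂ] H)) 0 :=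
  ⟨fun _ => zero_mem A, 0, by simpa using (tendsto_const_nhds :
    Tendsto (fun _ : ℕ => (0 : H →L[ℂ] H)) atTop (𝓝 0))⟩

lemma memL2_delta {x : H →L[ℂ] H} (hx : x ∈ A) (n : ℕ) :
    MemL2 (A : Set (H →L[ℂ] H)) (delta n x) := by
  refine ⟨fun k => ?_, x * star x, ?_⟩
  · by_cases h : k = n <;> simp [delta, h, hx]
  · have hterm : ∀ k, delta n x k * star (delta n x k) =
        if k = n then x * star x else 0 := by
      intro k; by_cases h : k = n <;> simp [delta, h]
    refine tendsto_atTop_of_eventually_const (i₀ := n + 1) fun M hM => ?_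
    rw [show (∑ k ∈ Finset.range M, delta n x k * star (delta n x k)) =
      ∑ k ∈ Finset.range M, (if k = n then x * star x else 0) from
        Finset.sum_congr rfl fun k _ => hterm k]
    rw [Finset.sum_ite_eq' (Finset.range M) n (fun _ => x * star x)]
    simp [Finset.mem_range]
    omega
  
lemma trunc_sum (a : ℕ → H →L[ℂ] H) (N M : ℕ) :
    ∑ k ∈ Finset.range M, trunc a N k * star (trunc a N k)
      = ∑ k ∈ Finset.range (min M N), a k * star (a k) := by
  rw [← sum_ite_lt (fun k => a k * star (a k)) M N]
  refine Finset.sum_congr rfl fun k _ => ?_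
  by_cases h : k < N <;> simp [trunc, h]

lemma memL2_trunc {a : ℕ → H →L[ℂ] H} (ha : ∀ k, a k ∈ A) (N : ℕ) :
    MemL2 (A : Set (H →L[ℂ] H)) (trunc a N) := by
  refine ⟨fun k => ?_, ∑ k ∈ Finset.range N, a k * star (a k), ?_⟩
  · by_cases h : k < N <;> simp [trunc, h, ha k]
  · refine tendsto_atTop_of_eventually_const (i₀ := N) fun M hM => ?_
    rw [trunc_sum, min_eq_right hM]

lemma tail_sum (a : ℕ → H →L[ℂ] H) (N M : ℕ) :
    ∑ k ∈ Finset.range M, tail a N k * star (tail a N k)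
      = (∑ k ∈ Finset.range M, a k * star (a k))
        - ∑ k ∈ Finset.range (min M N), a k * star (a k) := by
  rw [← sum_ite_lt (fun k => a k * star (a k)) M N, ← Finset.sum_sub_distrib]
  refine Finset.sum_congr rfl fun k _ => ?_
  by_cases h : k < N <;> simp [tail, h]

lemma memL2_tail {a : ℕ → H →L[ℂ] H} (ha : ∀ k, a k ∈ A)
    {sa : H →L[ℂ] H}
    (hsa : Tendsto (fun N : ℕ => ∑ n ∈ Finset.range N, a n * star (a n)) atTop (𝓝 sa))
    (N : ℕ) : MemL2 (A : Set (H →L[ℂ] H)) (tail a N) := by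
  refine ⟨fun k => ?_, sa - ∑ k ∈ Finset.range N, a k * star (a k), ?_⟩
  · by_cases h : k < N <;> simp [tail, h, ha k]
  · refine Tendsto.congr' ?_ (hsa.sub tendsto_const_nhds)
    filter_upwards [eventually_ge_atTop N] with M hM
    rw [tail_sum, min_eq_right hM]

lemma part2 (hA : IsClosed (A : Set (H →L[ℂ] H)))
    (L : (ℕ → H →L[ℂ] H) → (H →L[ℂ] H))
    (hLmem : ∀ a, MemL2 (A : Set (H →L[ℂ] H)) a → L a ∈ A)
    (hLadd : ∀ a b, MemL2 (A : Set (H →L[ℂ] H)) a → MemL2 (A : Set (H →L[ℂ] H)) b →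
      L (a + b) = L a + L b)
    (hLmod : ∀ c ∈ (A : Set (H →L[ℂ] H)), ∀ a, MemL2 (A : Set (H →L[ℂ] H)) a →
      L (fun n => c * a n) = c * L a)
    (hLbdd : ∃ C : ℝ, ∀ a, MemL2 (A : Set (H →L[ℂ] H)) a → ‖L a‖ ≤ C * l2norm a) :
    ∃ t : ℕ → H →L[ℂ] H, MemL2StrongLM (A : Set (H →L[ℂ] H)) t ∧
      ∀ a, MemL2 (A : Set (H →L[ℂ] H)) a →
        Tendsto (fun N : ℕ => ∑ n ∈ Finset.range N, a n * star (t n)) atTop (𝓝 (L a)) := by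
  obtain ⟨C0, hC0⟩ := hLbdd
  set C := max C0 0 with hCdef
  have hCpos : 0 ≤ C := le_max_right _ _
  have hC : ∀ a, MemL2 (A : Set (H →L[ℂ] H)) a → ‖L a‖ ≤ C * l2norm a := fun a ha =>
    (hC0 a ha).trans (mul_le_mul_of_nonneg_right (le_max_left _ _) (Real.sqrt_nonneg _))
  have hL0 : L 0 = 0 := by
    have h := hLadd 0 0 (memL2_zero A) (memL2_zero A)
    rw [add_zero] at h
    exact (left_eq_add.mp h)
  set t : ℕ → H →L[ℂ] H := fun n => star (L (delta n 1)) with htdef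
  have hst : ∀ n, star (t n) = L (delta n 1) := fun n => star_star _
  have htA : ∀ n, t n ∈ A := fun n => star_mem (hLmem _ (memL2_delta A (one_mem A) n))
  have hdelta : ∀ n, ∀ x ∈ A, L (delta n x) = x * star (t n) := by
    intro n x hx
    rw [hst]
    have h := hLmod x hx (delta n 1) (memL2_delta A (one_mem A) n)
    have heq : (fun k => x * delta n 1 k) = delta n x := by
      funext k; by_cases h' : k = n <;> simp [delta, h']
    rwa [heq] at h
  have htruncL : ∀ (a : ℕ → H →L[ℂ] H), (∀ k, a k ∈ A) → ∀ N,
      L (trunc a N) = ∑ n ∈ Finset.range N, a n * star (t n) := by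
    intro a haA N
    induction N with
    | zero =>
        rw [show trunc a 0 = 0 from funext fun k => by simp [trunc]]
        simp [hL0]
    | succ N ih =>
        have hsplit : trunc a (N + 1) = trunc a N + delta N (a N) := by
          funext k
          by_cases h1 : k < N
          · have h2 : k < N + 1 := by omega
            have h3 : k ≠ N := by omega
            simp [trunc, delta, h1, h2, h3]
          · by_cases h2 : k = N
            · subst h2
              simp [trunc, delta, h1, Nat.lt_succ_self]
            · have h3 : ¬ k < N + 1 := by omega
              simp [trunc, delta, h1, h2, h3]
        rw [hsplit, hLadd _ _ (memL2_trunc A haA N) (memL2_delta A (haA N) N), ih,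
          hdelta N (a N) (haA N), Finset.sum_range_succ]
  -- the key norm bound
  have hP : ∀ N, ‖∑ n ∈ Finset.range N, t n * star (t n)‖ ≤ C ^ 2 := by
    intro N
    set x := ‖∑ n ∈ Finset.range N, t n * star (t n)‖ with hxdef
    have hx0 : 0 ≤ x := norm_nonneg _
    have h1 : L (trunc t N) = ∑ n ∈ Finset.range N, t n * star (t n) := htruncL t htA N
    have hbdda : BddAbove (Set.range fun M =>
        ‖∑ k ∈ Finset.range M, trunc t N k * star (trunc t N k)‖) := by
      refine ⟨x, ?_⟩
      rintro y ⟨M, rfl⟩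
      dsimp only
      rw [trunc_sum]
      exact norm_P_mono t (min_le_right M N)
    have hsup : (⨆ M : ℕ, ‖∑ k ∈ Finset.range M, trunc t N k * star (trunc t N k)‖) = x := by
      refine le_antisymm (ciSup_le fun M => ?_) ?_
      · rw [trunc_sum]; exact norm_P_mono t (min_le_right M N)
      · have := le_ciSup hbdda N
        rwa [trunc_sum, min_self] at this
    have hl2 : l2norm (trunc t N) = Real.sqrt x := by rw [l2norm, hsup]
    have h2 : x ≤ C * Real.sqrt x := by
      have := hC _ (memL2_trunc A htA N)
      rwa [h1, hl2, ← hxdef] at this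
    nlinarith [Real.sq_sqrt hx0, Real.sqrt_nonneg x, sq_nonneg (C - Real.sqrt x)]
  refine ⟨t, ⟨fun n b hb => mul_mem (htA n) hb, C ^ 2, hP⟩, ?_⟩
  rintro a ⟨haA, sa, hsa⟩
  have hS : ∀ N, ∑ n ∈ Finset.range N, a n * star (t n) = L (trunc a N) :=
    fun N => (htruncL a haA N).symm
  have hsplitL : ∀ N, L a = L (trunc a N) + L (tail a N) := by
    intro N
    have heq : trunc a N + tail a N = a := by
      funext k; by_cases h : k < N <;> simp [trunc, tail, h]
    conv_lhs => rw [← heq]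
    exact hLadd _ _ (memL2_trunc A haA N) (memL2_tail A haA hsa N)
  rw [Metric.tendsto_atTop]
  intro ε hε
  set ε' := ε / (2 * (C + 1)) with hε'def
  have hε'pos : 0 < ε' := by positivity
  obtain ⟨N₀, hN₀⟩ := Metric.cauchySeq_iff.1 hsa.cauchySeq (ε' ^ 2) (by positivity)
  refine ⟨N₀, fun N hN => ?_⟩
  have htail_l2 : l2norm (tail a N) ≤ ε' := by
    rw [l2norm, show ε' = Real.sqrt (ε' ^ 2) from (Real.sqrt_sq hε'pos.le).symm]
    refine Real.sqrt_le_sqrt (ciSup_le fun M => ?_)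
    rw [tail_sum]
    rcases le_total M N with h | h
    · rw [min_eq_left h, sub_self, norm_zero]; positivity
    · rw [min_eq_right h]
      have := hN₀ M (le_trans hN h) N hN
      rw [dist_eq_norm] at this
      exact this.le
  have hdist : dist (∑ n ∈ Finset.range N, a n * star (t n)) (L a) ≤ C * ε' := by
    rw [dist_eq_norm, hS N, hsplitL N]
    rw [show L (trunc a N) - (L (trunc a N) + L (tail a N)) = -(L (tail a N)) by abel]
    rw [norm_neg]
    exact (hC _ (memL2_tail A haA hsa N)).trans
      (mul_le_mul_of_nonneg_left htail_l2 hCpos)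
  refine lt_of_le_of_lt hdist ?_
  rw [hε'def, mul_div_assoc', div_lt_iff₀ (by positivity)]
  nlinarith [hCpos, hε]


end WithA
end Stmt5Aux

/-- the map `φ : ℓ²_strong(LM(A)) → ℓ²(A)′`, `φ((tₙ))((aₙ)) = ∑ aₙtₙ*`, is a
well-defined isometry onto the dual of `ℓ²(A)` (the Banach `A`-module of all bounded module
maps `ℓ²(A) → A`). -/
theorem stmt_5 (A : StarSubalgebra ℂ (H →L[ℂ] H))
    (hA : IsClosed (A : Set (H →L[ℂ] H)))
    (hnd : Nondegenerate (A : Set (H →L[ℂ] H))) :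
    -- `φ` is well defined and isometric: every `(tₙ) ∈ ℓ²_strong(LM(A))` induces a bounded
    -- module map on `ℓ²(A)` with values in `A`, whose operator norm equals `‖(tₙ)‖`
    (∀ t : ℕ → H →L[ℂ] H, MemL2StrongLM (A : Set (H →L[ℂ] H)) t →
      (∀ a, MemL2 (A : Set (H →L[ℂ] H)) a →
        ∃ s ∈ (A : Set (H →L[ℂ] H)),
          Tendsto (fun N : ℕ => ∑ n ∈ Finset.range N, a n * star (t n)) atTop (𝓝 s)) ∧
      sSup {r : ℝ | ∃ a s, MemL2 (A : Set (H →L[ℂ] H)) a ∧ l2norm a ≤ 1 ∧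
          Tendsto (fun N : ℕ => ∑ n ∈ Finset.range N, a n * star (t n)) atTop (𝓝 s) ∧
          r = ‖s‖}
        = l2norm t)
    ∧
    -- `φ` is surjective: every bounded module map `L : ℓ²(A) → A` is represented by some
    -- `(tₙ) ∈ ℓ²_strong(LM(A))`
    (∀ L : (ℕ → H →L[ℂ] H) → (H →L[ℂ] H),
      (∀ a, MemL2 (A : Set (H →L[ℂ] H)) a → L a ∈ A) →
      (∀ a b, MemL2 (A : Set (H →L[ℂ] H)) a → MemL2 (A : Set (H →L[ℂ] H)) b →
        L (a + b) = L a + L b) →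
      (∀ c ∈ (A : Set (H →L[ℂ] H)), ∀ a, MemL2 (A : Set (H →L[ℂ] H)) a →
        L (fun n => c * a n) = c * L a) →
      (∃ C : ℝ, ∀ a, MemL2 (A : Set (H →L[ℂ] H)) a → ‖L a‖ ≤ C * l2norm a) →
      ∃ t : ℕ → H →L[ℂ] H, MemL2StrongLM (A : Set (H →L[ℂ] H)) t ∧
        ∀ a, MemL2 (A : Set (H →L[ℂ] H)) a →
          Tendsto (fun N : ℕ => ∑ n ∈ Finset.range N, a n * star (t n)) atTop (𝓝 (L a))) := by
  constructor
  · intro t ht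
    exact Stmt5Aux.part1 A hA t ht
  · intro L h1 h2 h3 h4
    exact Stmt5Aux.part2 A hA L h1 h2 h3 h4
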